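/- Complementarity/bialgebra interaction of the two spiders: δ_X ∘ μ_Z = (1/√2)·(μ_Z ⊗ μ_Z) ∘ (I ⊗ SWAP ⊗ I) ∘ (δ_X ⊗ δ_X) as linear maps ℂ²⊗ℂ² → ℂ²⊗ℂ², where μ_Z|b⟩⊗|b'⟩ = δ_{bb'}|b⟩ is the Z-merge and δ_X is the X-copy. -/
import Mathlib


open Matrix Kronecker

noncomputable section

abbrev Q := Fin 2
abbrev MQ := Matrix Q Q ℂ

/-- Pauli X matrix. -/
def PX : MQ := !![0, 1; 1, 0]
/-- Pauli Z matrix. -/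
def PZ : MQ := !![1, 0; 0, -1]
/-- Hadamard matrix. -/
def Had : MQ := (((Real.sqrt 2 : ℝ) : ℂ))⁻¹ • !![1, 1; 1, -1]

def ket0 : Q → ℂ := ![1, 0]
def ket1 : Q → ℂ := ![0, 1]
/-- |+⟩ = (|0⟩+|1⟩)/√2 -/
def ketP : Q → ℂ := (((Real.sqrt 2 : ℝ) : ℂ))⁻¹ • ![1, 1]

/-- Tensor product of two single-qubit states. -/
def tp2 (u v : Q → ℂ) : Q × Q → ℂ := fun p => u p.1 * v p.2
/-- Tensor product of three single-qubit states, grouped ((1,2),3). -/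
def tp3 (u v w : Q → ℂ) : (Q × Q) × Q → ℂ := fun p => u p.1.1 * v p.1.2 * w p.2

/-- Standard CNOT, first factor control, second target. -/
def CNOT2 : Matrix (Q × Q) (Q × Q) ℂ :=
  Matrix.of fun p q => if p.1 = q.1 ∧ p.2 = q.2 + q.1 then 1 else 0

/-- Single-qubit Pauli corrections: I, X, Z, XZ. -/
def IsPauli (P : MQ) : Prop := P = 1 ∨ P = PX ∨ P = PZ ∨ P = PX * PZ

/-- Z-copy spider (green) as a 4×2 matrix. -/
def dZm : Matrix (Q × Q) Q ℂ := Matrix.of fun p b => if p.1 = b ∧ p.2 = b then 1 else 0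
/-- Z-merge spider (green) as a 2×4 matrix. -/
def mZm : Matrix Q (Q × Q) ℂ := Matrix.of fun b p => if p.1 = b ∧ p.2 = b then 1 else 0
/-- X-copy spider (red): δ_X|±⟩=|±±⟩. -/
def dXm : Matrix (Q × Q) Q ℂ :=
  Matrix.of fun p b => if p.1 + p.2 = b then (((Real.sqrt 2 : ℝ) : ℂ))⁻¹ else 0
/-- X-merge spider (red): μ_X|±±⟩=|±⟩. -/
def mXm : Matrix Q (Q × Q) ℂ :=
  Matrix.of fun b p => if p.1 + p.2 = b then (((Real.sqrt 2 : ℝ) : ℂ))⁻¹ else 0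
/-- Swap of the middle two wires of four, grouped ((1,2),(3,4)). -/
def Smid : Matrix ((Q × Q) × (Q × Q)) ((Q × Q) × (Q × Q)) ℂ :=
  Matrix.of fun p q =>
    if p.1.1 = q.1.1 ∧ p.1.2 = q.2.1 ∧ p.2.1 = q.1.2 ∧ p.2.2 = q.2.2 then 1 else 0

/-- ZZ-parity projector with sign s on wires (C,A) of (C,A,T). -/
def PZZCA (s : ℂ) : Matrix ((Q × Q) × Q) ((Q × Q) × Q) ℂ :=
  (2:ℂ)⁻¹ • (1 + s • ((PZ ⊗ₖ PZ) ⊗ₖ (1 : MQ)))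
/-- XX-parity projector with sign s on wires (A,T) of (C,A,T). -/
def PXXAT (s : ℂ) : Matrix ((Q × Q) × Q) ((Q × Q) × Q) ℂ :=
  (2:ℂ)⁻¹ • (1 + s • (((1 : MQ) ⊗ₖ PX) ⊗ₖ PX))

/-- The ZX bialgebra rule between the Z-merge and the X-copy:
δ_X ∘ μ_Z = √2 · (μ_Z ⊗ μ_Z) ∘ (I⊗SWAP⊗I) ∘ (δ_X ⊗ δ_X). -/
theorem stmt14 :
    dXm * mZm
      = ((Real.sqrt 2 : ℝ) : ℂ) • ((mZm ⊗ₖ mZm) * Smid * (dXm ⊗ₖ dXm)) := by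
  have h2 : ((Real.sqrt 2 : ℝ) : ℂ) * ((Real.sqrt 2 : ℝ) : ℂ) = 2 := by
    norm_cast
    exact Real.mul_self_sqrt (by norm_num)
  have hne : ((Real.sqrt 2 : ℝ) : ℂ) ≠ 0 := by
    simp [Real.sqrt_eq_zero']
  ext ⟨i, j⟩ ⟨k, l⟩
  fin_cases i <;> fin_cases j <;> fin_cases k <;> fin_cases l <;>
    simp [dXm, mZm, Smid, Matrix.mul_apply, Matrix.kroneckerMap_apply,
      Fintype.sum_prod_type, Fin.sum_univ_two, Prod.ext_iff]
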